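/- Let k ≥ 2 and let G be any k×n matrix over F_2. Then there exist a natural number m with m ≤ k+1 if k is even and m ≤ k if k is odd, and column vectors c_1, …, c_m ∈ F_2^k, such that the augmented k×(n+m) matrix G' = [G | c_1 ⋯ c_m] satisfies G' · G'ᵀ = 0 over F_2; that is, the rows of G' are pairwise orthogonal and self-orthogonal, so the row space of G' is a self-orthogonal binary code extending the code generated by G (a shortest self-orthogonal embedding requires adding at most k+1 columns when k is even and at most k columns when k is odd). -/

import Mathlib

open Matrix Finset

abbrev F2 := ZMod 2

instance decPredRowNe (k : ℕ) (A : Matrix (Fin k) (Fin k) F2) :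
    DecidablePred (fun i => A i ≠ 0) :=
  fun i => inferInstanceAs (Decidable ¬ ((A i : Fin k → F2) = 0))

lemma f2_ne_zero : ∀ {a : F2}, a ≠ 0 → a = 1 := by decide

lemma f2_add_self : ∀ a : F2, a + a = 0 := by decide

lemma mat_add_self {ι κ : Type*} (M : Matrix ι κ F2) : M + M = 0 := by
  ext i j; exact f2_add_self _

lemma decomp_aux (N : ℕ) : ∀ (k : ℕ) (A : Matrix (Fin k) (Fin k) F2),
    Aᵀ = A → (Finset.univ.filter (fun i => A i ≠ 0)).card ≤ N →
    ∃ (p s : ℕ) (d : Fin p → Fin k → F2) (x y : Fin s → Fin k → F2),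
      p + 2*s ≤ (Finset.univ.filter (fun i => A i ≠ 0)).card ∧
      A = (∑ r, vecMulVec (d r) (d r)) +
          ∑ t, (vecMulVec (x t) (y t) + vecMulVec (y t) (x t)) := by
  induction N with
  | zero =>
    intro k A hA hcard
    refine ⟨0, 0, Fin.elim0, Fin.elim0, Fin.elim0, by simp, ?_⟩
    have h0 : (Finset.univ.filter (fun i => A i ≠ 0)).card = 0 := Nat.le_zero.mp hcard
    have : ∀ i, A i = 0 := by
      intro i
      by_contra h
      have : i ∈ Finset.univ.filter (fun i => A i ≠ 0) := by simp [h]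
      simp [Finset.card_eq_zero.mp h0] at this
    ext i j; simp [this i]
  | succ N ih =>
    intro k A hA hcard
    have hsym : ∀ u v, A u v = A v u := by
      intro u v; nth_rewrite 1 [← hA]; rw [transpose_apply]
    by_cases hA0 : A = 0
    · exact ⟨0, 0, Fin.elim0, Fin.elim0, Fin.elim0, by simp, by simp [hA0]⟩
    by_cases hd : ∃ i, A i i = 1
    -- pivot case
    · obtain ⟨i, hi⟩ := hd
      set A' : Matrix (Fin k) (Fin k) F2 := A + vecMulVec (A i) (A i) with hA'
      have hA'symm : A'ᵀ = A' := by
        rw [hA', transpose_add, hA]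
        congr 1
        ext u v
        simp [vecMulVec_apply, mul_comm]
      have hrowz : ∀ u, A u = 0 → A' u = 0 := by
        intro u hu
        funext t
        have hau : A i u = 0 := by
          rw [hsym i u]; simpa using congrFun hu i
        simp [hA', vecMulVec_apply, hau]
        simpa using congrFun hu t
      have hrowi : A' i = 0 := by
        funext t
        simp [hA', vecMulVec_apply, hi, f2_add_self]
      have himem : i ∈ Finset.univ.filter (fun u => A u ≠ 0) := by
        simp only [Finset.mem_filter, Finset.mem_univ, true_and]
        intro h
        have := congrFun h i
        rw [hi] at this
        simp at this
      have hsubset : Finset.univ.filter (fun u => A' u ≠ 0) ⊆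
          (Finset.univ.filter (fun u => A u ≠ 0)).erase i := by
        intro u hu
        simp only [Finset.mem_filter, Finset.mem_univ, true_and] at hu
        rw [Finset.mem_erase]
        constructor
        · rintro rfl; exact hu hrowi
        · simp only [Finset.mem_filter, Finset.mem_univ, true_and]
          intro h; exact hu (hrowz u h)
      have hcard' : (Finset.univ.filter (fun u => A' u ≠ 0)).card + 1 ≤
          (Finset.univ.filter (fun u => A u ≠ 0)).card := by
        have h1 := Finset.card_le_card hsubset
        rw [Finset.card_erase_of_mem himem] at h1
        have h2 : 1 ≤ (Finset.univ.filter (fun u => A u ≠ 0)).card :=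
          Finset.card_pos.mpr ⟨i, himem⟩
        omega
      obtain ⟨p, s, d, x, y, hle, hdec⟩ := ih k A' hA'symm (by omega)
      refine ⟨p + 1, s, Fin.cons (A i) d, x, y, by omega, ?_⟩
      have hAA' : A = vecMulVec (A i) (A i) + A' := by
        rw [hA', ← add_assoc, add_comm (vecMulVec (A i) (A i)) A, add_assoc,
          mat_add_self, add_zero]
      rw [Fin.sum_univ_succ]
      simp only [Fin.cons_zero, Fin.cons_succ]
      rw [add_assoc, ← hdec, ← hAA']
    -- hyperbolic case
    · push_neg at hd
      have hdiag : ∀ u, A u u = 0 := by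
        intro u
        by_contra h
        exact hd u (f2_ne_zero h)
      obtain ⟨i, j, hij⟩ : ∃ i j, A i j = 1 := by
        by_contra h
        push_neg at h
        apply hA0
        ext u v
        by_contra h2
        exact h u v (f2_ne_zero h2)
      have hne : i ≠ j := by
        rintro rfl; rw [hdiag i] at hij; exact zero_ne_one hij
      have hji : A j i = 1 := by rw [hsym j i]; exact hij
      set A' : Matrix (Fin k) (Fin k) F2 :=
        A + (vecMulVec (A i) (A j) + vecMulVec (A j) (A i)) with hA'
      have hA'symm : A'ᵀ = A' := by
        rw [hA', transpose_add, hA, transpose_add]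
        congr 1
        ext u v
        simp [vecMulVec_apply, mul_comm]
        ring
      have hrowz : ∀ u, A u = 0 → A' u = 0 := by
        intro u hu
        funext t
        have hau : A i u = 0 := by rw [hsym i u]; simpa using congrFun hu i
        have hbu : A j u = 0 := by rw [hsym j u]; simpa using congrFun hu j
        simp [hA', vecMulVec_apply, hau, hbu]
        simpa using congrFun hu t
      have hrowi : A' i = 0 := by
        funext t
        simp [hA', vecMulVec_apply, hdiag i, hji, f2_add_self]
      have hrowj : A' j = 0 := by
        funext t
        simp [hA', vecMulVec_apply, hdiag j, hij, f2_add_self]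
      have himem : i ∈ Finset.univ.filter (fun u => A u ≠ 0) := by
        simp only [Finset.mem_filter, Finset.mem_univ, true_and]
        intro h
        have := congrFun h j; rw [hij] at this; simp at this
      have hjmem : j ∈ Finset.univ.filter (fun u => A u ≠ 0) := by
        simp only [Finset.mem_filter, Finset.mem_univ, true_and]
        intro h
        have := congrFun h i; rw [hji] at this; simp at this
      have hsubset : Finset.univ.filter (fun u => A' u ≠ 0) ⊆
          ((Finset.univ.filter (fun u => A u ≠ 0)).erase i).erase j := by
        intro u hu
        simp only [Finset.mem_filter, Finset.mem_univ, true_and] at hu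
        rw [Finset.mem_erase, Finset.mem_erase]
        refine ⟨?_, ?_, ?_⟩
        · rintro rfl; exact hu hrowj
        · rintro rfl; exact hu hrowi
        · simp only [Finset.mem_filter, Finset.mem_univ, true_and]
          intro h; exact hu (hrowz u h)
      have hcard' : (Finset.univ.filter (fun u => A' u ≠ 0)).card + 2 ≤
          (Finset.univ.filter (fun u => A u ≠ 0)).card := by
        have h1 := Finset.card_le_card hsubset
        rw [Finset.card_erase_of_mem (Finset.mem_erase.mpr ⟨Ne.symm hne, hjmem⟩),
          Finset.card_erase_of_mem himem] at h1
        have h2 : 2 ≤ (Finset.univ.filter (fun u => A u ≠ 0)).card := by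
          have := Finset.one_lt_card_iff.mpr ⟨i, j, himem, hjmem, hne⟩
          omega
        omega
      obtain ⟨p, s, d, x, y, hle, hdec⟩ := ih k A' hA'symm (by omega)
      refine ⟨p, s + 1, d, Fin.cons (A i) x, Fin.cons (A j) y, by omega, ?_⟩
      have hAA' : A = (vecMulVec (A i) (A j) + vecMulVec (A j) (A i)) + A' := by
        rw [hA', ← add_assoc,
          add_comm (vecMulVec (A i) (A j) + vecMulVec (A j) (A i)) A, add_assoc,
          mat_add_self, add_zero]
      rw [Fin.sum_univ_succ]
      simp only [Fin.cons_zero, Fin.cons_succ]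
      rw [← add_assoc, add_comm (∑ r, vecMulVec (d r) (d r)), add_assoc, ← hdec, ← hAA']
def dotp {m : ℕ} (f g : Fin m → F2) : F2 := ∑ j, f j * g j

lemma dotp_append {m q : ℕ} (f g : Fin m → F2) (h h' : Fin q → F2) :
    dotp (Fin.append f h) (Fin.append g h') = dotp f g + dotp h h' := by
  unfold dotp
  rw [Fin.sum_univ_add]
  congr 1
  · exact Finset.sum_congr rfl fun j _ => by rw [Fin.append_left, Fin.append_left]
  · exact Finset.sum_congr rfl fun j _ => by rw [Fin.append_right, Fin.append_right]

lemma dotp_add_left {m : ℕ} (f g h : Fin m → F2) :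
    dotp (f + g) h = dotp f h + dotp g h := by
  unfold dotp
  rw [← Finset.sum_add_distrib]
  apply Finset.sum_congr rfl
  intro j _
  simp [add_mul]

lemma dotp_add_right {m : ℕ} (f g h : Fin m → F2) :
    dotp f (g + h) = dotp f g + dotp f h := by
  unfold dotp
  rw [← Finset.sum_add_distrib]
  apply Finset.sum_congr rfl
  intro j _
  simp [mul_add]

lemma dotp_comm {m : ℕ} (f g : Fin m → F2) : dotp f g = dotp g f := by
  unfold dotp
  apply Finset.sum_congr rfl
  intro j _
  exact mul_comm _ _

lemma dotp_zero_left {m : ℕ} (g : Fin m → F2) : dotp 0 g = 0 := by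
  simp [dotp]

lemma dotp_zero_right {m : ℕ} (g : Fin m → F2) : dotp g 0 = 0 := by
  simp [dotp]

lemma dotp_single {q : ℕ} (r r' : Fin q) :
    dotp (Pi.single r (1:F2)) (Pi.single r' 1) = if r = r' then 1 else 0 := by
  unfold dotp
  rw [Finset.sum_eq_single r]
  · simp [Pi.single_apply]
  · intro b _ hb
    simp [Pi.single_apply, Ne.symm hb]
  · simp

lemma gram_family : ∀ s : ℕ, ∃ (m : ℕ) (u v : Fin s → Fin m → F2) (z : Fin m → F2),
    m = 2*s+1 ∧
    (∀ t t', dotp (u t) (u t') = 0) ∧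
    (∀ t t', dotp (v t) (v t') = 0) ∧
    (∀ t t', dotp (u t) (v t') = if t = t' then 1 else 0) ∧
    (∀ t, dotp z (u t) = 0) ∧ (∀ t, dotp z (v t) = 0) ∧ dotp z z = 1 := by
  intro s
  induction s with
  | zero =>
    refine ⟨1, Fin.elim0, Fin.elim0, fun _ => 1, rfl, fun t => t.elim0, fun t => t.elim0,
      fun t => t.elim0, fun t => t.elim0, fun t => t.elim0, ?_⟩
    simp [dotp]
  | succ s ih =>
    obtain ⟨m, u, v, z, hm, huu, hvv, huv, hzu, hzv, hzz⟩ := ih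
    set ext : (Fin m → F2) → Fin (m+2) → F2 := fun f => Fin.append f ![0,0] with hext
    set e1 : Fin (m+2) → F2 := Fin.append (0 : Fin m → F2) ![1,0] with he1
    set e2 : Fin (m+2) → F2 := Fin.append (0 : Fin m → F2) ![0,1] with he2
    have kee : ∀ f g : Fin m → F2, dotp (ext f) (ext g) = dotp f g := by
      intro f g
      rw [hext]
      simp only []
      rw [dotp_append]
      have : dotp (![0,0] : Fin 2 → F2) ![0,0] = 0 := by decide
      rw [this, add_zero]
    have ke1 : ∀ f : Fin m → F2, dotp (ext f) e1 = 0 := by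
      intro f
      rw [hext, he1, dotp_append, dotp_zero_right]
      have : dotp (![0,0] : Fin 2 → F2) ![1,0] = 0 := by decide
      rw [this, add_zero]
    have ke2 : ∀ f : Fin m → F2, dotp (ext f) e2 = 0 := by
      intro f
      rw [hext, he2, dotp_append, dotp_zero_right]
      have : dotp (![0,0] : Fin 2 → F2) ![0,1] = 0 := by decide
      rw [this, add_zero]
    have k11 : dotp e1 e1 = 1 := by
      rw [he1, dotp_append, dotp_zero_left]
      have : dotp (![1,0] : Fin 2 → F2) ![1,0] = 1 := by decide
      rw [this, zero_add]
    have k22 : dotp e2 e2 = 1 := by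
      rw [he2, dotp_append, dotp_zero_left]
      have : dotp (![0,1] : Fin 2 → F2) ![0,1] = 1 := by decide
      rw [this, zero_add]
    have k12 : dotp e1 e2 = 0 := by
      rw [he1, he2, dotp_append, dotp_zero_left]
      have : dotp (![1,0] : Fin 2 → F2) ![0,1] = 0 := by decide
      rw [this, zero_add]
    have k1e : ∀ f : Fin m → F2, dotp e1 (ext f) = 0 := fun f => by
      rw [dotp_comm]; exact ke1 f
    have k2e : ∀ f : Fin m → F2, dotp e2 (ext f) = 0 := fun f => by
      rw [dotp_comm]; exact ke2 f
    have k21 : dotp e2 e1 = 0 := by rw [dotp_comm]; exact k12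
    refine ⟨m + 2, Fin.cons (ext z + e1) (fun t => ext (u t)),
      Fin.cons (e1 + e2) (fun t => ext (v t)), ext z + e1 + e2, by omega,
      ?_, ?_, ?_, ?_, ?_, ?_⟩
    · intro t t'
      induction t using Fin.cases with
      | zero =>
        induction t' using Fin.cases with
        | zero =>
          simp only [Fin.cons_zero]
          rw [dotp_add_left, dotp_add_right, dotp_add_right, kee, ke1, k1e, k11, hzz]
          decide
        | succ t' =>
          simp only [Fin.cons_zero, Fin.cons_succ]
          rw [dotp_add_left, kee, k1e, hzu, add_zero]
      | succ t =>
        induction t' using Fin.cases with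
        | zero =>
          simp only [Fin.cons_zero, Fin.cons_succ]
          rw [dotp_add_right, kee, ke1, add_zero, dotp_comm]
          exact hzu t
        | succ t' =>
          simp only [Fin.cons_succ]
          rw [kee]; exact huu t t'
    · intro t t'
      induction t using Fin.cases with
      | zero =>
        induction t' using Fin.cases with
        | zero =>
          simp only [Fin.cons_zero]
          rw [dotp_add_left, dotp_add_right, dotp_add_right, k11, k12, k21, k22]
          decide
        | succ t' =>
          simp only [Fin.cons_zero, Fin.cons_succ]
          rw [dotp_add_left, k1e, k2e, add_zero]
      | succ t =>
        induction t' using Fin.cases with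
        | zero =>
          simp only [Fin.cons_zero, Fin.cons_succ]
          rw [dotp_add_right, ke1, ke2, add_zero]
        | succ t' =>
          simp only [Fin.cons_succ]
          rw [kee]; exact hvv t t'
    · intro t t'
      induction t using Fin.cases with
      | zero =>
        induction t' using Fin.cases with
        | zero =>
          simp only [Fin.cons_zero, if_pos rfl]
          rw [dotp_add_left, dotp_add_right, dotp_add_right, ke1, ke2, k11, k12]
          decide
        | succ t' =>
          simp only [Fin.cons_zero, Fin.cons_succ]
          rw [dotp_add_left, kee, k1e, hzv, add_zero]
          simp [(Fin.succ_ne_zero t').symm]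
      | succ t =>
        induction t' using Fin.cases with
        | zero =>
          simp only [Fin.cons_zero, Fin.cons_succ]
          rw [dotp_add_right, ke1, ke2, add_zero]
          simp [Fin.succ_ne_zero t]
        | succ t' =>
          simp only [Fin.cons_succ]
          rw [kee, huv]
          simp [Fin.succ_inj]
    · intro t
      induction t using Fin.cases with
      | zero =>
        simp only [Fin.cons_zero]
        rw [dotp_add_left, dotp_add_left, dotp_add_right, dotp_add_right, dotp_add_right,
          kee, ke1, k1e, k11, k2e, k21, hzz]
        decide
      | succ t =>
        simp only [Fin.cons_succ]
        rw [dotp_add_left, dotp_add_left, kee, k1e, k2e, hzu, add_zero, add_zero]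
    · intro t
      induction t using Fin.cases with
      | zero =>
        simp only [Fin.cons_zero]
        rw [dotp_add_left, dotp_add_left, dotp_add_right, dotp_add_right, dotp_add_right,
          ke1, ke2, k11, k12, k21, k22]
        decide
      | succ t =>
        simp only [Fin.cons_succ]
        rw [dotp_add_left, dotp_add_left, kee, k1e, k2e, hzv, add_zero, add_zero]
    · rw [dotp_add_left, dotp_add_left, dotp_add_right, dotp_add_right, dotp_add_right,
        dotp_add_right, dotp_add_right, dotp_add_right,
        kee, ke1, ke2, k1e, k11, k12, k2e, k21, k22, hzz]
      decide

lemma gram_family_w (s p : ℕ) :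
    ∃ (m : ℕ) (u v : Fin s → Fin m → F2) (w : Fin p → Fin m → F2),
      m ≤ 2*s + max p 1 ∧
      (∀ t t', dotp (u t) (u t') = 0) ∧
      (∀ t t', dotp (v t) (v t') = 0) ∧
      (∀ t t', dotp (u t) (v t') = if t = t' then 1 else 0) ∧
      (∀ r t, dotp (w r) (u t) = 0) ∧
      (∀ r t, dotp (w r) (v t) = 0) ∧
      (∀ r r', dotp (w r) (w r') = if r = r' then 1 else 0) := by
  obtain ⟨m0, u, v, z, hm0, huu, hvv, huv, hzu, hzv, hzz⟩ := gram_family s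
  match p with
  | 0 =>
    exact ⟨m0, u, v, Fin.elim0, by omega, huu, hvv, huv,
      fun r => r.elim0, fun r => r.elim0, fun r => r.elim0⟩
  | q + 1 =>
    set ext : (Fin m0 → F2) → Fin (m0+q) → F2 := fun f => Fin.append f 0 with hext
    have kee : ∀ f g : Fin m0 → F2, dotp (ext f) (ext g) = dotp f g := by
      intro f g
      rw [hext]; simp only []
      rw [dotp_append, dotp_zero_left, add_zero]
    have kes : ∀ (f : Fin m0 → F2) (h : Fin q → F2),
        dotp (ext f) (Fin.append 0 h) = 0 := by
      intro f h
      rw [hext]; simp only []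
      rw [dotp_append, dotp_zero_left, dotp_zero_right, add_zero]
    have kse : ∀ (f : Fin m0 → F2) (h : Fin q → F2),
        dotp (Fin.append 0 h) (ext f) = 0 := by
      intro f h
      rw [dotp_comm]; exact kes f h
    have kss : ∀ (h h' : Fin q → F2),
        dotp (Fin.append (0 : Fin m0 → F2) h) (Fin.append 0 h') = dotp h h' := by
      intro h h'
      rw [dotp_append, dotp_zero_left, zero_add]
    refine ⟨m0 + q, fun t => ext (u t), fun t => ext (v t),
      Fin.cons (ext z) (fun r => Fin.append 0 (Pi.single r 1)), by omega,
      ?_, ?_, ?_, ?_, ?_, ?_⟩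
    · intro t t'; rw [kee]; exact huu t t'
    · intro t t'; rw [kee]; exact hvv t t'
    · intro t t'; rw [kee]; exact huv t t'
    · intro r t
      induction r using Fin.cases with
      | zero => simp only [Fin.cons_zero]; rw [kee]; exact hzu t
      | succ r => simp only [Fin.cons_succ]; exact kse _ _
    · intro r t
      induction r using Fin.cases with
      | zero => simp only [Fin.cons_zero]; rw [kee]; exact hzv t
      | succ r => simp only [Fin.cons_succ]; exact kse _ _
    · intro r r'
      induction r using Fin.cases with
      | zero =>
        induction r' using Fin.cases with
        | zero => simp only [Fin.cons_zero, if_pos rfl]; rw [kee]; exact hzz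
        | succ r' =>
          simp only [Fin.cons_zero, Fin.cons_succ]
          rw [kes]
          simp [(Fin.succ_ne_zero r').symm]
      | succ r =>
        induction r' using Fin.cases with
        | zero =>
          simp only [Fin.cons_zero, Fin.cons_succ]
          rw [kse]
          simp [Fin.succ_ne_zero r]
        | succ r' =>
          simp only [Fin.cons_succ]
          rw [kss, dotp_single]
          simp [Fin.succ_inj]

lemma dotp_sum_sum {ι : Type*} [Fintype ι] {m : ℕ} (α β : ι → F2) (f g : ι → Fin m → F2) :
    (∑ j : Fin m, (∑ a, α a * f a j) * (∑ b, β b * g b j)) =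
    ∑ a, ∑ b, α a * β b * dotp (f a) (g b) := by
  unfold dotp
  simp only [Finset.sum_mul_sum]
  rw [Finset.sum_comm]
  apply Finset.sum_congr rfl
  intro a _
  rw [Finset.sum_comm]
  apply Finset.sum_congr rfl
  intro b _
  rw [Finset.mul_sum]
  apply Finset.sum_congr rfl
  intro j _
  ring

theorem stmt_9 (k n : ℕ) (hk : 2 ≤ k) (G : Matrix (Fin k) (Fin n) (ZMod 2)) :
    ∃ (m : ℕ) (c : Fin m → Fin k → ZMod 2) (Gext : Matrix (Fin k) (Fin (n + m)) (ZMod 2)),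
      (if Even k then m ≤ k + 1 else m ≤ k) ∧
      (∀ i : Fin k, Gext i = Fin.append (G i) fun t : Fin m => c t i) ∧
      Gext * Gext.transpose = 0 := by
  set A : Matrix (Fin k) (Fin k) F2 := G * Gᵀ with hAdef
  have hA : Aᵀ = A := by
    rw [hAdef, transpose_mul, transpose_transpose]
  have hcard : (Finset.univ.filter (fun i => A i ≠ 0)).card ≤ k := by
    calc (Finset.univ.filter (fun i => A i ≠ 0)).card
        ≤ (Finset.univ : Finset (Fin k)).card := Finset.card_filter_le _ _
      _ = k := by simp
  obtain ⟨p, s, d, x, y, hps, hdec⟩ := decomp_aux k k A hA hcard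
  have hps' : p + 2*s ≤ k := le_trans hps hcard
  obtain ⟨m, u, v, w, hm, huu, hvv, huv, hwu, hwv, hww⟩ := gram_family_w s p
  set coef : (Fin s ⊕ Fin s ⊕ Fin p) → Fin k → F2 := Sum.elim x (Sum.elim y d) with hcoef
  set vect : (Fin s ⊕ Fin s ⊕ Fin p) → Fin m → F2 := Sum.elim u (Sum.elim v w) with hvect
  set c : Fin m → Fin k → F2 := fun t i => ∑ a, coef a i * vect a t with hc
  refine ⟨m, c, Matrix.of fun i => Fin.append (G i) (fun t => c t i), ?_, fun i => rfl, ?_⟩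
  · split_ifs with h
    · rw [Nat.even_iff] at h
      omega
    · rw [Nat.not_even_iff] at h
      omega
  · ext i i'
    rw [Matrix.mul_apply]
    simp only [Matrix.zero_apply, Matrix.transpose_apply, Matrix.of_apply]
    rw [Fin.sum_univ_add]
    simp only [Fin.append_left, Fin.append_right]
    have h1 : ∑ j : Fin n, G i j * G i' j = A i i' := by
      rw [hAdef, Matrix.mul_apply]
      simp [Matrix.transpose_apply]
    have hvu : ∀ t t', dotp (v t) (u t') = if t' = t then 1 else 0 := by
      intro t t'; rw [dotp_comm]; exact huv t' t
    have huw : ∀ t r, dotp (u t) (w r) = 0 := by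
      intro t r; rw [dotp_comm]; exact hwu r t
    have hvw : ∀ t r, dotp (v t) (w r) = 0 := by
      intro t r; rw [dotp_comm]; exact hwv r t
    have h2 : ∑ t : Fin m, c t i * c t i' = A i i' := by
      rw [hc]
      simp only []
      rw [dotp_sum_sum (fun a => coef a i) (fun a => coef a i') vect vect]
      rw [hcoef, hvect]
      simp only [Fintype.sum_sum_type, Sum.elim_inl, Sum.elim_inr]
      simp only [huu, hvv, huv, hvu, huw, hvw, hwu, hwv, hww]
      simp only [mul_zero, Finset.sum_const_zero, add_zero, zero_add, mul_ite, mul_one,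
        Finset.sum_ite_eq, Finset.sum_ite_eq', Finset.mem_univ, if_true]
      rw [hdec]
      simp only [Matrix.add_apply, Matrix.sum_apply, vecMulVec_apply]
      rw [Finset.sum_add_distrib]
      abel
    rw [h1, h2, f2_add_self]
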